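/- A linear map between finite-dimensional real vector spaces is characterized by commuting with homotheties: if φ : V¹ → V² is a smooth map between finite-dimensional real vector spaces satisfying φ(t·x) = t·φ(x) for all t ≥ 0 and x ∈ V¹, then φ is linear. -/

import Mathlib

/-- A smooth map between finite-dimensional real vector spaces which commutes
with homotheties (`φ (t • x) = t • φ x` for all `t ≥ 0`) is linear. -/
theorem stmt7 {V W : Type*} [NormedAddCommGroup V] [NormedSpace ℝ V] [FiniteDimensional ℝ V]
    [NormedAddCommGroup W] [NormedSpace ℝ W] [FiniteDimensional ℝ W]
    (φ : V → W) (hφ : ContDiff ℝ 1 φ)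
    (hhom : ∀ t : ℝ, 0 ≤ t → ∀ x, φ (t • x) = t • φ x) :
    IsLinearMap ℝ φ := by
  have h0 : φ 0 = 0 := by
    have := hhom 0 le_rfl 0
    simpa using this
  have hd : HasFDerivAt φ (fderiv ℝ φ 0) 0 :=
    (hφ.differentiable one_ne_zero 0).hasFDerivAt
  have key : ∀ x, φ x = fderiv ℝ φ 0 x := by
    intro x
    have h1 : Filter.Tendsto (fun n : ℕ => (n : ℝ) + 1) Filter.atTop Filter.atTop :=
      Filter.tendsto_atTop_add_const_right Filter.atTop 1 tendsto_natCast_atTop_atTop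
    have hc : Filter.Tendsto (fun n : ℕ => ‖((n : ℝ) + 1)‖) Filter.atTop Filter.atTop := by
      simpa [Real.norm_eq_abs, Function.comp_def] using Filter.Tendsto.comp Filter.tendsto_abs_atTop_atTop h1
    have hlim := hd.lim x hc
    have heq : (fun n : ℕ => ((n : ℝ) + 1) • (φ (0 + ((n : ℝ) + 1)⁻¹ • x) - φ 0))
        = fun _ : ℕ => φ x := by
      funext n
      have hn : (0:ℝ) ≤ ((n : ℝ) + 1)⁻¹ := by positivity
      have hne : ((n : ℝ) + 1) ≠ 0 := by positivity
      rw [zero_add, hhom _ hn, h0, sub_zero, smul_smul, mul_inv_cancel₀ hne, one_smul]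
    rw [heq] at hlim
    exact tendsto_nhds_unique tendsto_const_nhds hlim
  have := (fderiv ℝ φ 0).isLinear
  constructor
  · intro x y; rw [key, key, key]; exact (fderiv ℝ φ 0).map_add x y
  · intro c x; rw [key, key]; exact (fderiv ℝ φ 0).map_smul c x
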